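/- Fix α ∈ (0,π) and x ∈ (0,π). Let C := min(|sin x|, |sin α|) > 0. Then there exists δ > 0 such that for all (s,u) in the Euclidean ball of radius δ around (α, x), |g_x^α(s,u)| ≤ (4/C)·|s−α|/((s−α)² + (u−x)²), where g_x^α(s,u) = sin(x)·sin((s−α)/2)·sin((s+α)/2) / ( sin²((u−x)/2)·sin²((s+α)/2) + sin²((u+x)/2)·sin²((s−α)/2) ). -/

import Mathlib

open Real

noncomputable def gfun (α x s u : ℝ) : ℝ :=
  Real.sin x * Real.sin ((s - α) / 2) * Real.sin ((s + α) / 2) /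
    (Real.sin ((u - x) / 2) ^ 2 * Real.sin ((s + α) / 2) ^ 2
      + Real.sin ((u + x) / 2) ^ 2 * Real.sin ((s - α) / 2) ^ 2)

private lemma sin_lip (a b : ℝ) : |Real.sin a - Real.sin b| ≤ |a - b| := by
  rw [Real.sin_sub_sin, abs_mul, abs_mul]
  have h1 : |Real.sin ((a - b) / 2)| ≤ |(a - b) / 2| := Real.abs_sin_le_abs
  have h2 : |Real.cos ((a + b) / 2)| ≤ 1 := Real.abs_cos_le_one _
  calc |(2:ℝ)| * |Real.sin ((a - b) / 2)| * |Real.cos ((a + b) / 2)|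
      ≤ |(2:ℝ)| * |(a - b) / 2| * 1 := by
        apply mul_le_mul (mul_le_mul le_rfl h1 (abs_nonneg _) (abs_nonneg _)) h2
          (abs_nonneg _) (by positivity)
    _ = |a - b| := by rw [abs_two, abs_div, mul_one, abs_two]; ring

private lemma sin_lb_nonneg {y : ℝ} (h0 : 0 ≤ y) (h1 : y ≤ 1/8) :
    63/64 * y ≤ Real.sin y := by
  rcases eq_or_lt_of_le h0 with h | h
  · simp [← h]
  · have hs := Real.sin_gt_sub_cube h
    have hy2 : y * y ≤ 1/64 := by nlinarith
    nlinarith [mul_le_mul_of_nonneg_left hy2 h0]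

private lemma sin_lb {y : ℝ} (h1 : |y| ≤ 1/8) : 63/64 * |y| ≤ |Real.sin y| := by
  have key : ∀ z : ℝ, 0 ≤ z → z ≤ 1/8 → 63/64 * z ≤ |Real.sin z| := by
    intro z hz0 hz1
    have hs : 0 ≤ Real.sin z :=
      Real.sin_nonneg_of_nonneg_of_le_pi hz0 (by nlinarith [Real.pi_gt_three])
    rw [abs_of_nonneg hs]
    exact sin_lb_nonneg hz0 hz1
  rcases le_or_gt 0 y with h | h
  · rw [abs_of_nonneg h] at *
    exact key y h h1
  · rw [abs_of_neg h] at *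
    calc 63/64 * (-y) ≤ |Real.sin (-y)| := key (-y) (by linarith) h1
      _ = |Real.sin y| := by rw [Real.sin_neg, abs_neg]

private lemma abs_lt_of_sq_lt' {a c : ℝ} (h : a^2 < c^2) (hc : 0 < c) : |a| < c := by
  nlinarith [sq_abs a, abs_nonneg a]

private lemma sq_le_of_le_abs {c d : ℝ} (hc : 0 ≤ c) (h : c ≤ |d|) : c^2 ≤ d^2 := by
  nlinarith [sq_abs d, abs_nonneg d]

set_option maxHeartbeats 1000000 in
theorem gfun_local_bound (α x : ℝ) (hα : α ∈ Set.Ioo 0 π) (hx : x ∈ Set.Ioo 0 π) :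
    ∃ δ > 0, ∀ s u : ℝ, (s - α) ^ 2 + (u - x) ^ 2 < δ ^ 2 →
      |gfun α x s u| ≤ (4 / min |Real.sin x| |Real.sin α|) *
        (|s - α| / ((s - α) ^ 2 + (u - x) ^ 2)) := by
  obtain ⟨hα0, hαπ⟩ := hα
  obtain ⟨hx0, hxπ⟩ := hx
  have hSx : 0 < Real.sin x := Real.sin_pos_of_pos_of_lt_pi hx0 hxπ
  have hSa : 0 < Real.sin α := Real.sin_pos_of_pos_of_lt_pi hα0 hαπ
  have hax : |Real.sin x| = Real.sin x := abs_of_pos hSx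
  have haa : |Real.sin α| = Real.sin α := abs_of_pos hSa
  set C := min |Real.sin x| |Real.sin α| with hCdef
  have hC : 0 < C := lt_min (abs_pos.2 hSx.ne') (abs_pos.2 hSa.ne')
  have hCx : C ≤ Real.sin x := hax ▸ min_le_left _ _
  have hCa : C ≤ Real.sin α := haa ▸ min_le_right _ _
  have hC1 : C ≤ 1 := hCx.trans (Real.sin_le_one x)
  have hprod : Real.sin x * Real.sin α ≤ C := by
    rcases le_total (Real.sin x) (Real.sin α) with h | h
    · have : C = Real.sin x := by rw [hCdef, hax, haa, min_eq_left h]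
      nlinarith [Real.sin_le_one α]
    · have : C = Real.sin α := by rw [hCdef, hax, haa, min_eq_right h]
      nlinarith [Real.sin_le_one x]
  refine ⟨C/4, by positivity, fun s u h => ?_⟩
  rcases eq_or_lt_of_le (by positivity : (0:ℝ) ≤ (s - α) ^ 2 + (u - x) ^ 2) with hr | hr
  · have h1 : (s - α)^2 = 0 := by
      have := sq_nonneg (s - α); have := sq_nonneg (u - x); linarith
    have hs : s = α := by
      have h2 : s - α = 0 := by
        have := pow_eq_zero_iff (n := 2) (by norm_num) |>.mp h1
        exact this
      linarith
    subst hs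
    simp [gfun]
  · -- main case
    have hs4 : |s - α| < C/4 := by
      refine abs_lt_of_sq_lt' ?_ (by positivity)
      have := sq_nonneg (u - x); linarith
    have hu4 : |u - x| < C/4 := by
      refine abs_lt_of_sq_lt' ?_ (by positivity)
      have := sq_nonneg (s - α); linarith
    unfold gfun
    set a := Real.sin ((s - α)/2) with hadef
    set b := Real.sin ((u - x)/2) with hbdef
    set B := Real.sin ((s + α)/2) with hBdef
    set A := Real.sin ((u + x)/2) with hAdef
    have hta : |(s - α)/2| = |s - α|/2 := by rw [abs_div]; norm_num
    have htb : |(u - x)/2| = |u - x|/2 := by rw [abs_div]; norm_num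
    have h8a : |(s - α)/2| ≤ 1/8 := by rw [hta]; linarith
    have h8b : |(u - x)/2| ≤ 1/8 := by rw [htb]; linarith
    have ha_ub : |a| ≤ |s - α|/2 := hta ▸ Real.abs_sin_le_abs
    have ha_lb : 63/64 * (|s - α|/2) ≤ |a| := hta ▸ sin_lb h8a
    have hb_lb : 63/64 * (|u - x|/2) ≤ |b| := htb ▸ sin_lb h8b
    -- bounds on B and A
    have hBd : |B - Real.sin α| ≤ |s - α|/2 := by
      have h0 := sin_lip ((s + α)/2) α
      have he : (s + α)/2 - α = (s - α)/2 := by ring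
      rw [he, hta] at h0
      exact h0
    have hAd : |A - Real.sin x| ≤ |u - x|/2 := by
      have h0 := sin_lip ((u + x)/2) x
      have he : (u + x)/2 - x = (u - x)/2 := by ring
      rw [he, htb] at h0
      exact h0
    have hB_lb : 7/8 * C ≤ |B| := by
      have h1 : |Real.sin α| - |B| ≤ |Real.sin α - B| := abs_sub_abs_le_abs_sub _ _
      rw [abs_sub_comm, haa] at h1
      linarith
    have hB_ub : |B| ≤ 9/8 * Real.sin α := by
      have h1 : |B| - |Real.sin α| ≤ |B - Real.sin α| := abs_sub_abs_le_abs_sub _ _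
      rw [haa] at h1
      linarith
    have hA_lb : 7/8 * C ≤ |A| := by
      have h1 : |Real.sin x| - |A| ≤ |Real.sin x - A| := abs_sub_abs_le_abs_sub _ _
      rw [abs_sub_comm, hax] at h1
      linarith
    -- square bounds
    have hB2 : 49/64 * C^2 ≤ B^2 := by
      have := sq_le_of_le_abs (by positivity) hB_lb
      calc 49/64 * C^2 = (7/8 * C)^2 := by ring
        _ ≤ B^2 := this
    have hA2 : 49/64 * C^2 ≤ A^2 := by
      have := sq_le_of_le_abs (by positivity) hA_lb
      calc 49/64 * C^2 = (7/8 * C)^2 := by ring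
        _ ≤ A^2 := this
    have ha2 : (63/64)^2 * ((s - α)^2/4) ≤ a^2 := by
      have h1 := sq_le_of_le_abs (by positivity) ha_lb
      have habs2 : (|s - α|/2)^2 = (s - α)^2/4 := by rw [div_pow, sq_abs]; norm_num
      calc (63/64)^2 * ((s - α)^2/4) = (63/64)^2 * (|s - α|/2)^2 := by rw [habs2]
        _ = (63/64 * (|s - α|/2))^2 := by ring
        _ ≤ a^2 := h1
    have hb2 : (63/64)^2 * ((u - x)^2/4) ≤ b^2 := by
      have h1 := sq_le_of_le_abs (by positivity) hb_lb
      have habs2 : (|u - x|/2)^2 = (u - x)^2/4 := by rw [div_pow, sq_abs]; norm_num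
      calc (63/64)^2 * ((u - x)^2/4) = (63/64)^2 * (|u - x|/2)^2 := by rw [habs2]
        _ = (63/64 * (|u - x|/2))^2 := by ring
        _ ≤ b^2 := h1
    have hab : (63/64)^2 * (((s - α)^2 + (u - x)^2)/4) ≤ a^2 + b^2 := by
      have e : (63/64:ℝ)^2 * (((s - α)^2 + (u - x)^2)/4)
          = (63/64)^2 * ((s - α)^2/4) + (63/64)^2 * ((u - x)^2/4) := by ring
      rw [e]; exact add_le_add ha2 hb2
    have hD_lb : 49/64 * C^2 * (a^2 + b^2) ≤ b^2 * B^2 + A^2 * a^2 := by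
      have e : 49/64 * C^2 * (a^2 + b^2)
          = b^2 * (49/64 * C^2) + a^2 * (49/64 * C^2) := by ring
      rw [e]
      refine add_le_add (mul_le_mul_of_nonneg_left hB2 (sq_nonneg b)) ?_
      calc a^2 * (49/64 * C^2) = (49/64 * C^2) * a^2 := by ring
        _ ≤ A^2 * a^2 := mul_le_mul_of_nonneg_right hA2 (sq_nonneg a)
    have hDchain : 49/64 * C^2 * ((63/64)^2 * (((s - α)^2 + (u - x)^2)/4))
        ≤ b^2 * B^2 + A^2 * a^2 :=
      le_trans (mul_le_mul_of_nonneg_left hab (by positivity)) hD_lb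
    have hD : 0 < b^2 * B^2 + A^2 * a^2 :=
      lt_of_lt_of_le (by positivity) hDchain
    -- numerator bound
    have hN : |Real.sin x * a * B| ≤ 9/16 * C * |s - α| := by
      rw [abs_mul, abs_mul, hax]
      have h1 : Real.sin x * |a| * |B| ≤ Real.sin x * (|s - α|/2) * (9/8 * Real.sin α) := by
        apply mul_le_mul _ hB_ub (abs_nonneg _) (by positivity)
        exact mul_le_mul_of_nonneg_left ha_ub hSx.le
      have h2 : Real.sin x * Real.sin α * |s - α| ≤ C * |s - α| :=
        mul_le_mul_of_nonneg_right hprod (abs_nonneg _)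
      have e1 : Real.sin x * (|s - α|/2) * (9/8 * Real.sin α)
          = 9/16 * (Real.sin x * Real.sin α * |s - α|) := by ring
      have e2 : 9/16 * C * |s - α| = 9/16 * (C * |s - α|) := by ring
      rw [e2]; rw [e1] at h1; linarith
    -- conclude
    have hgoal : (4 / C) * (|s - α| / ((s - α)^2 + (u - x)^2)) =
        (4 * |s - α|) / (C * ((s - α)^2 + (u - x)^2)) := by
      rw [div_mul_div_comm]
    rw [hgoal, abs_div, abs_of_pos hD, div_le_div_iff₀ hD (by positivity)]
    have key1 : |Real.sin x * a * B| * (C * ((s - α)^2 + (u - x)^2)) ≤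
        (9/16 * C * |s - α|) * (C * ((s - α)^2 + (u - x)^2)) :=
      mul_le_mul_of_nonneg_right hN (by positivity)
    have key2 : 4 * |s - α| * (49/64 * C^2 * ((63/64)^2 * (((s - α)^2 + (u - x)^2)/4))) ≤
        4 * |s - α| * (b^2 * B^2 + A^2 * a^2) :=
      mul_le_mul_of_nonneg_left hDchain (by positivity)
    have hmid : (9/16 * C * |s - α|) * (C * ((s - α)^2 + (u - x)^2)) ≤
        4 * |s - α| * (49/64 * C^2 * ((63/64)^2 * (((s - α)^2 + (u - x)^2)/4))) := by
      have hP : 0 ≤ C^2 * (|s - α| * ((s - α)^2 + (u - x)^2)) := by positivity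
      have e1 : (9/16 * C * |s - α|) * (C * ((s - α)^2 + (u - x)^2))
          = 9/16 * (C^2 * (|s - α| * ((s - α)^2 + (u - x)^2))) := by ring
      have e2 : 4 * |s - α| * (49/64 * C^2 * ((63/64)^2 * (((s - α)^2 + (u - x)^2)/4)))
          = 194481/262144 * (C^2 * (|s - α| * ((s - α)^2 + (u - x)^2))) := by ring
      rw [e1, e2]; linarith
    linarith [key1, key2, hmid]
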